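/- Let P₁, …, P_k ⊆ ℝⁿ be compact convex sets with nonempty interior such that 0 lies in the interior of the Minkowski sum P₁ + … + P_k. Then there exists a unique V ∈ ℝⁿ such that Σ_{i=1}^k A_{P_i}(V) = 0. -/

import Mathlib

set_option maxHeartbeats 1000000
set_option synthInstance.maxHeartbeats 400000

open scoped RealInnerProductSpace Pointwise
open MeasureTheory

/-- The `V`-weighted volume `Vol_V(P) = ∫_P e^{⟨V,p⟩} dp`. -/
noncomputable def weightedVol {n : ℕ} (P : Set (EuclideanSpace ℝ (Fin n)))
    (V : EuclideanSpace ℝ (Fin n)) : ℝ :=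
  ∫ p in P, Real.exp ⟪V, p⟫

/-- The weighted barycenter `A_P(V) = Vol_V(P)⁻¹ ∫_P p e^{⟨V,p⟩} dp`. -/
noncomputable def weightedBary {n : ℕ} (P : Set (EuclideanSpace ℝ (Fin n)))
    (V : EuclideanSpace ℝ (Fin n)) : EuclideanSpace ℝ (Fin n) :=
  (weightedVol P V)⁻¹ • ∫ p in P, Real.exp ⟪V, p⟫ • p

namespace Stmt3Aux

open Real Set Metric

variable {n : ℕ} {P : Set (EuclideanSpace ℝ (Fin n))}

lemma weightedVol_pos (hP : IsCompact P) (hint : (interior P).Nonempty)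
    (V : EuclideanSpace ℝ (Fin n)) : 0 < weightedVol P V := by
  have hc : Continuous fun p : EuclideanSpace ℝ (Fin n) => Real.exp ⟪V, p⟫ :=
    (continuous_const.inner continuous_id).rexp
  rw [weightedVol, setIntegral_pos_iff_support_of_nonneg_ae
    (Filter.Eventually.of_forall fun p => (Real.exp_pos _).le)
    (hc.continuousOn.integrableOn_compact hP)]
  have : (Function.support fun p : EuclideanSpace ℝ (Fin n) => Real.exp ⟪V, p⟫) = Set.univ := by
    ext p; simp [Function.mem_support, (Real.exp_pos _).ne']
  rw [this, Set.univ_inter]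
  exact lt_of_lt_of_le (isOpen_interior.measure_pos volume hint) (measure_mono interior_subset)

lemma hyperplane_volume_zero {u : EuclideanSpace ℝ (Fin n)} (hu : u ≠ 0) (c : ℝ) :
    volume {p : EuclideanSpace ℝ (Fin n) | ⟪u, p⟫ = c} = 0 := by
  set x₀ : EuclideanSpace ℝ (Fin n) := (c / ‖u‖^2) • u with hx₀
  have hux₀ : ⟪u, x₀⟫ = c := by
    rw [hx₀, real_inner_smul_right, real_inner_self_eq_norm_sq]
    field_simp [norm_ne_zero_iff.2 hu]
  set K : Submodule ℝ (EuclideanSpace ℝ (Fin n)) := LinearMap.ker (innerSL ℝ u : EuclideanSpace ℝ (Fin n) →ₗ[ℝ] ℝ) with hK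
  have hKne : K ≠ ⊤ := by
    intro h
    have : u ∈ K := h ▸ Submodule.mem_top
    rw [hK, LinearMap.mem_ker] at this
    simp only [ContinuousLinearMap.coe_coe, innerSL_apply_apply] at this
    exact hu (inner_self_eq_zero.mp this)
  have hS : {p : EuclideanSpace ℝ (Fin n) | ⟪u, p⟫ = c} = (fun p => -x₀ + p) ⁻¹' (K : Set _) := by
    ext p
    simp only [Set.mem_setOf_eq, Set.mem_preimage, SetLike.mem_coe, hK, LinearMap.mem_ker]
    constructor
    · intro h
      show (innerSL ℝ u) (-x₀ + p) = 0
      simp [inner_add_right, inner_neg_right, hux₀, h]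
    · intro h
      have : ⟪u, -x₀ + p⟫ = 0 := h
      rw [inner_add_right, inner_neg_right, hux₀] at this
      linarith
  rw [hS, measure_preimage_add]
  exact Measure.addHaar_submodule volume K hKne

lemma midpoint_sq_lt (hP : IsCompact P) (hint : (interior P).Nonempty) {V W : EuclideanSpace ℝ (Fin n)}
    (hVW : V ≠ W) :
    weightedVol P ((2:ℝ)⁻¹ • (V + W)) ^ 2 < weightedVol P V * weightedVol P W := by
  classical
  set φ : EuclideanSpace ℝ (Fin n) → ℝ := fun p => Real.exp (⟪V, p⟫ / 2) with hφ
  set ψ : EuclideanSpace ℝ (Fin n) → ℝ := fun p => Real.exp (⟪W, p⟫ / 2) with hψ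
  have hφc : Continuous φ := ((continuous_const.inner continuous_id).div_const 2).rexp
  have hψc : Continuous ψ := ((continuous_const.inner continuous_id).div_const 2).rexp
  set A := weightedVol P V with hA
  set B := weightedVol P W with hB
  set C := weightedVol P ((2:ℝ)⁻¹ • (V + W)) with hC
  have hApos : 0 < A := weightedVol_pos hP hint V
  have hBpos : 0 < B := weightedVol_pos hP hint W
  have hCpos : 0 < C := weightedVol_pos hP hint _
  have hφφ : ∀ p, φ p * φ p = Real.exp ⟪V, p⟫ := fun p => by
    rw [hφ, ← Real.exp_add]; ring_nf
  have hψψ : ∀ p, ψ p * ψ p = Real.exp ⟪W, p⟫ := fun p => by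
    rw [hψ, ← Real.exp_add]; ring_nf
  have hφψ : ∀ p, φ p * ψ p = Real.exp ⟪(2:ℝ)⁻¹ • (V + W), p⟫ := fun p => by
    rw [hφ, hψ, ← Real.exp_add, real_inner_smul_left, inner_add_left]; ring_nf
  have iφφ : IntegrableOn (fun p => φ p * φ p) P volume :=
    (hφc.mul hφc).continuousOn.integrableOn_compact hP
  have iψψ : IntegrableOn (fun p => ψ p * ψ p) P volume :=
    (hψc.mul hψc).continuousOn.integrableOn_compact hP
  have iφψ : IntegrableOn (fun p => φ p * ψ p) P volume :=
    (hφc.mul hψc).continuousOn.integrableOn_compact hP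
  have eφφ : ∫ p in P, φ p * φ p = A := by
    rw [hA, weightedVol]; exact integral_congr_ae (Filter.Eventually.of_forall fun p => hφφ p)
  have eψψ : ∫ p in P, ψ p * ψ p = B := by
    rw [hB, weightedVol]; exact integral_congr_ae (Filter.Eventually.of_forall fun p => hψψ p)
  have eφψ : ∫ p in P, φ p * ψ p = C := by
    rw [hC, weightedVol]; exact integral_congr_ae (Filter.Eventually.of_forall fun p => hφψ p)
  set h : EuclideanSpace ℝ (Fin n) → ℝ := fun p => B * φ p - C * ψ p with hh
  have key : ∫ p in P, (h p)^2 = B * (A * B - C^2) := by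
    have e1 : ∀ p, (h p)^2 =
        B^2 * (φ p * φ p) - (2*B*C) * (φ p * ψ p) + C^2 * (ψ p * ψ p) := by
      intro p; rw [hh]; ring
    rw [integral_congr_ae (Filter.Eventually.of_forall e1)]
    have i1 : IntegrableOn (fun p => B^2 * (φ p * φ p) - (2*B*C) * (φ p * ψ p)) P volume :=
      (iφφ.const_mul _).sub (iφψ.const_mul _)
    have i2 : IntegrableOn (fun p => C^2 * (ψ p * ψ p)) P volume := iψψ.const_mul _
    have i3 : IntegrableOn (fun p => B^2 * (φ p * φ p)) P volume := iφφ.const_mul _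
    have i4 : IntegrableOn (fun p => (2*B*C) * (φ p * ψ p)) P volume := iφψ.const_mul _
    rw [integral_add i1 i2, integral_sub i3 i4,
      integral_const_mul, integral_const_mul, integral_const_mul, eφφ, eψψ, eφψ]
    ring
  have hsq_nonneg : 0 ≤ ∫ p in P, (h p)^2 :=
    integral_nonneg fun p => sq_nonneg _
  have hle : C^2 ≤ A * B := by nlinarith
  rcases lt_or_eq_of_le hle with hlt | heq
  · exact hlt
  exfalso
  have hI0 : ∫ p in P, (h p)^2 = 0 := by rw [key, ← heq]; ring
  have ih2 : IntegrableOn (fun p => (h p)^2) P volume := by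
    have : Continuous fun p => (h p)^2 := ((hφc.const_smul B).sub (hψc.const_smul C)).pow 2
    exact this.continuousOn.integrableOn_compact hP
  have hae : (fun p => (h p)^2) =ᵐ[volume.restrict P] 0 :=
    (integral_eq_zero_iff_of_nonneg_ae (Filter.Eventually.of_forall fun p => sq_nonneg _) ih2).mp hI0
  set u := V - W with hu
  have hune : u ≠ 0 := sub_ne_zero.mpr hVW
  set c : ℝ := 2 * (Real.log C - Real.log B) with hc
  have hae2 : ∀ᵐ p ∂(volume.restrict P), ⟪u, p⟫ = c := by
    filter_upwards [hae] with p hp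
    have hp' : h p ^ 2 = 0 := hp
    have h0 : B * φ p - C * ψ p = 0 := sq_eq_zero_iff.mp hp'
    have hBp : B * φ p = C * ψ p := by linarith
    have hlogs : Real.log B + ⟪V, p⟫ / 2 = Real.log C + ⟪W, p⟫ / 2 := by
      have e1 : Real.exp (Real.log B + ⟪V, p⟫ / 2) = Real.exp (Real.log C + ⟪W, p⟫ / 2) := by
        rw [Real.exp_add, Real.exp_add, Real.exp_log hBpos, Real.exp_log hCpos]
        exact hBp
      exact Real.exp_injective e1
    rw [hu, inner_sub_left, hc]
    linarith
  have hrest : (volume.restrict P) {p : EuclideanSpace ℝ (Fin n) | ⟪u, p⟫ = c}ᶜ = 0 := by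
    have := ae_iff.mp hae2
    simpa [Set.compl_setOf] using this
  have hmeasS : MeasurableSet {p : EuclideanSpace ℝ (Fin n) | ⟪u, p⟫ = c} :=
    (isClosed_eq (continuous_const.inner continuous_id) continuous_const).measurableSet
  have hPz : volume P = 0 := by
    have h1 : volume ({p : EuclideanSpace ℝ (Fin n) | ⟪u, p⟫ = c}ᶜ ∩ P) = 0 := by
      rwa [Measure.restrict_apply hmeasS.compl] at hrest
    have h2 : P ⊆ {p : EuclideanSpace ℝ (Fin n) | ⟪u, p⟫ = c} ∪
        ({p : EuclideanSpace ℝ (Fin n) | ⟪u, p⟫ = c}ᶜ ∩ P) := by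
      intro p hp
      by_cases hps : ⟪u, p⟫ = c
      · exact Or.inl hps
      · exact Or.inr ⟨hps, hp⟩
    refine le_antisymm ?_ zero_le
    calc volume P ≤ volume ({p : EuclideanSpace ℝ (Fin n) | ⟪u, p⟫ = c} ∪
        ({p : EuclideanSpace ℝ (Fin n) | ⟪u, p⟫ = c}ᶜ ∩ P)) := measure_mono h2
      _ ≤ _ + _ := measure_union_le _ _
      _ = 0 := by rw [hyperplane_volume_zero hune c, h1, add_zero]
  have : 0 < volume P :=
    lt_of_lt_of_le (isOpen_interior.measure_pos volume hint) (measure_mono interior_subset)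
  rw [hPz] at this
  exact lt_irrefl _ this

lemma convexOn_logVol (hP : IsCompact P) (hint : (interior P).Nonempty) :
    ConvexOn ℝ Set.univ (fun V => Real.log (weightedVol P V)) := by
  refine ⟨convex_univ, fun V _ W _ a b ha hb hab => ?_⟩
  rcases eq_or_lt_of_le ha with rfl | ha'
  · have hb1 : b = 1 := by linarith
    subst hb1
    simp
  rcases eq_or_lt_of_le hb with rfl | hb'
  · have ha1 : a = 1 := by linarith
    subst ha1
    simp
  have ha1 : a < 1 := by linarith
  have hb1 : b < 1 := by linarith
  haveI : IsFiniteMeasure (volume.restrict P) :=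
    ⟨by rw [Measure.restrict_apply_univ]; exact hP.measure_lt_top⟩
  set f : EuclideanSpace ℝ (Fin n) → ℝ := fun p => Real.exp (a * ⟪V, p⟫) with hf
  set g : EuclideanSpace ℝ (Fin n) → ℝ := fun p => Real.exp (b * ⟪W, p⟫) with hg
  have hfc : Continuous f := (continuous_const.mul (continuous_const.inner continuous_id)).rexp
  have hgc : Continuous g := (continuous_const.mul (continuous_const.inner continuous_id)).rexp
  have hpq : Real.HolderConjugate (1/a) (1/b) := by
    rw [Real.holderConjugate_iff]
    constructor
    · rw [lt_div_iff₀ ha']; linarith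
    · rw [one_div, one_div, inv_inv, inv_inv]; exact hab
  obtain ⟨Cf, hCf⟩ := hP.exists_bound_of_continuousOn hfc.continuousOn
  obtain ⟨Cg, hCg⟩ := hP.exists_bound_of_continuousOn hgc.continuousOn
  have hmeas : MeasurableSet P := hP.isClosed.measurableSet
  have hfL : MemLp f (ENNReal.ofReal (1/a)) (volume.restrict P) :=
    MemLp.of_bound hfc.aestronglyMeasurable.restrict Cf
      ((ae_restrict_mem hmeas).mono fun p hp => hCf p hp)
  have hgL : MemLp g (ENNReal.ofReal (1/b)) (volume.restrict P) :=
    MemLp.of_bound hgc.aestronglyMeasurable.restrict Cg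
      ((ae_restrict_mem hmeas).mono fun p hp => hCg p hp)
  have hold := MeasureTheory.integral_mul_le_Lp_mul_Lq_of_nonneg hpq
    (Filter.Eventually.of_forall fun p => (Real.exp_pos _).le)
    (Filter.Eventually.of_forall fun p => (Real.exp_pos _).le) hfL hgL
  have hfg : ∀ p, f p * g p = Real.exp ⟪a • V + b • W, p⟫ := fun p => by
    rw [hf, hg, ← Real.exp_add, inner_add_left, real_inner_smul_left, real_inner_smul_left]
  have hfp : ∀ p : EuclideanSpace ℝ (Fin n), f p ^ (1/a) = Real.exp ⟪V, p⟫ := fun p => by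
    rw [hf, ← Real.exp_mul]
    congr 1
    field_simp
  have hgp : ∀ p : EuclideanSpace ℝ (Fin n), g p ^ (1/b) = Real.exp ⟪W, p⟫ := fun p => by
    rw [hg, ← Real.exp_mul]
    congr 1
    field_simp
  have h1a : (1:ℝ)/(1/a) = a := by field_simp
  have h1b : (1:ℝ)/(1/b) = b := by field_simp
  rw [integral_congr_ae (Filter.Eventually.of_forall hfg)] at hold
  simp_rw [show ∀ p : EuclideanSpace ℝ (Fin n), Real.exp (a * ⟪V, p⟫) ^ (1/a) = Real.exp ⟪V, p⟫ from hfp,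
    show ∀ p : EuclideanSpace ℝ (Fin n), Real.exp (b * ⟪W, p⟫) ^ (1/b) = Real.exp ⟪W, p⟫ from hgp,
    h1a, h1b] at hold
  have hApos := weightedVol_pos hP hint V
  have hBpos := weightedVol_pos hP hint W
  have hCpos := weightedVol_pos hP hint (a • V + b • W)
  have hold2 : weightedVol P (a • V + b • W) ≤ (weightedVol P V)^a * (weightedVol P W)^b := hold
  have hlog := Real.log_le_log hCpos hold2
  rw [Real.log_mul (Real.rpow_pos_of_pos hApos a).ne' (Real.rpow_pos_of_pos hBpos b).ne',
    Real.log_rpow hApos, Real.log_rpow hBpos] at hlog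
  simpa [smul_eq_mul] using hlog

lemma strictConvexOn_of_midpoint {E' : Type*} [AddCommGroup E'] [Module ℝ E'] {f : E' → ℝ}
    (hf : ConvexOn ℝ Set.univ f)
    (h : ∀ x y : E', x ≠ y → f ((2:ℝ)⁻¹ • (x + y)) < (f x + f y) / 2) :
    StrictConvexOn ℝ Set.univ f := by
  refine ⟨convex_univ, fun x _ y _ hxy a b ha hb hab => ?_⟩
  set s : ℝ := min a b / 2 with hs
  have hmin : 0 < min a b := lt_min ha hb
  have hs0 : 0 < s := by positivity
  have hsa : s < a := by
    have h' : s ≤ a / 2 := by rw [hs]; nlinarith [min_le_left a b]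
    linarith
  have hsb : s < b := by
    have : s ≤ b / 2 := by rw [hs]; linarith [min_le_right a b]
    linarith
  set z₁ := (a + s) • x + (b - s) • y with hz₁
  set z₂ := (a - s) • x + (b + s) • y with hz₂
  have hzne : z₁ ≠ z₂ := by
    intro heq
    apply hxy
    have h2 : (2 * s) • (x - y) = 0 := by
      have : z₁ - z₂ = (2 * s) • (x - y) := by rw [hz₁, hz₂]; module
      rw [← this, sub_eq_zero]; exact heq
    rcases smul_eq_zero.mp h2 with h' | h'
    · exact absurd h' (by positivity)
    · exact sub_eq_zero.mp h'
  have hmid : a • x + b • y = (2:ℝ)⁻¹ • (z₁ + z₂) := by rw [hz₁, hz₂]; module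
  have h1 : f z₁ ≤ (a + s) * f x + (b - s) * f y :=
    hf.2 (mem_univ x) (mem_univ y) (by linarith) (by linarith) (by linarith)
  have h2 : f z₂ ≤ (a - s) * f x + (b + s) * f y :=
    hf.2 (mem_univ x) (mem_univ y) (by linarith) (by linarith) (by linarith)
  calc f (a • x + b • y) = f ((2:ℝ)⁻¹ • (z₁ + z₂)) := by rw [hmid]
    _ < (f z₁ + f z₂) / 2 := h z₁ z₂ hzne
    _ ≤ a * f x + b * f y := by linarith

lemma strictConvexOn_logVol (hP : IsCompact P) (hint : (interior P).Nonempty) :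
    StrictConvexOn ℝ Set.univ (fun V => Real.log (weightedVol P V)) := by
  refine strictConvexOn_of_midpoint (convexOn_logVol hP hint) fun V W hVW => ?_
  have h1 := midpoint_sq_lt hP hint hVW
  have hA := weightedVol_pos hP hint V
  have hB := weightedVol_pos hP hint W
  have hC := weightedVol_pos hP hint ((2:ℝ)⁻¹ • (V + W))
  have := Real.log_lt_log (by positivity) h1
  rw [Real.log_pow, Real.log_mul hA.ne' hB.ne'] at this
  push_cast at this
  linarith

lemma hasFDerivAt_weightedVol (hP : IsCompact P) (V₀ : EuclideanSpace ℝ (Fin n)) :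
    HasFDerivAt (weightedVol P)
      (innerSL ℝ (∫ p in P, Real.exp ⟪V₀, p⟫ • p)) V₀ := by
  have hmeas : MeasurableSet P := hP.isClosed.measurableSet
  haveI : IsFiniteMeasure (volume.restrict P) :=
    ⟨by rw [Measure.restrict_apply_univ]; exact hP.measure_lt_top⟩
  obtain ⟨R, hR⟩ := hP.isBounded.subset_closedBall 0
  set R' := max R 0 with hR'
  have hRnorm : ∀ p ∈ P, ‖p‖ ≤ R' := fun p hp => by
    have := hR hp
    rw [mem_closedBall, dist_zero_right] at this
    exact this.trans (le_max_left _ _)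
  set F : EuclideanSpace ℝ (Fin n) → EuclideanSpace ℝ (Fin n) → ℝ :=
    fun V p => Real.exp ⟪V, p⟫ with hF
  set F' : EuclideanSpace ℝ (Fin n) → EuclideanSpace ℝ (Fin n) →
      (EuclideanSpace ℝ (Fin n) →L[ℝ] ℝ) :=
    fun V p => Real.exp ⟪V, p⟫ • (innerSL ℝ p) with hF'
  set bound : EuclideanSpace ℝ (Fin n) → ℝ :=
    fun _ => R' * Real.exp ((‖V₀‖ + 1) * R') with hbound
  have hD : ∀ p, ∀ V, HasFDerivAt (fun V => F V p) (F' V p) V := by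
    intro p V
    have h1 : HasFDerivAt (fun V : EuclideanSpace ℝ (Fin n) => ⟪V, p⟫) (innerSL ℝ p) V := by
      have : (fun V : EuclideanSpace ℝ (Fin n) => ⟪V, p⟫) = fun V => (innerSL ℝ p) V := by
        ext w; exact real_inner_comm _ _
      rw [this]
      exact (innerSL ℝ p).hasFDerivAt
    exact h1.exp
  have key := hasFDerivAt_integral_of_dominated_of_fderiv_le (μ := volume.restrict P)
    (F := F) (F' := F') (x₀ := V₀) (bound := bound) (ball_mem_nhds V₀ zero_lt_one)
    (Filter.Eventually.of_forall fun V =>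
      ((continuous_const.inner continuous_id).rexp).aestronglyMeasurable.restrict)
    (((continuous_const.inner continuous_id).rexp).continuousOn.integrableOn_compact hP)
    (by
      have hc : Continuous (F' V₀) := by
        rw [hF']
        exact ((continuous_const.inner continuous_id).rexp).smul (innerSL ℝ).continuous
      exact hc.aestronglyMeasurable.restrict)
    (by
      refine (ae_restrict_mem hmeas).mono fun p hp V hV => ?_
      rw [hF']
      have h1 : ‖Real.exp ⟪V, p⟫ • (innerSL ℝ p)‖ = Real.exp ⟪V, p⟫ * ‖p‖ := by
        rw [norm_smul _ ((innerSL ℝ) p), Real.norm_eq_abs, abs_of_pos (Real.exp_pos _),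
          innerSL_apply_norm]
      rw [h1, hbound]
      have h2 : ⟪V, p⟫ ≤ (‖V₀‖ + 1) * R' := by
        calc ⟪V, p⟫ ≤ ‖V‖ * ‖p‖ := real_inner_le_norm _ _
          _ ≤ (‖V₀‖ + 1) * R' := by
            apply mul_le_mul _ (hRnorm p hp) (norm_nonneg _) (by positivity)
            have := mem_ball_iff_norm.mp hV
            have h3 := norm_sub_norm_le V V₀
            linarith [norm_sub_rev V V₀ ▸ h3]
      calc Real.exp ⟪V, p⟫ * ‖p‖ ≤ Real.exp ((‖V₀‖ + 1) * R') * R' := by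
            apply mul_le_mul (Real.exp_le_exp.mpr h2) (hRnorm p hp) (norm_nonneg _)
              (Real.exp_pos _).le
        _ = R' * Real.exp ((‖V₀‖ + 1) * R') := mul_comm _ _)
    (integrable_const _)
    (Filter.Eventually.of_forall fun p V _ => hD p V)
  have hc' : Continuous (F' V₀) := by
    rw [hF']
    exact ((continuous_const.inner continuous_id).rexp).smul (innerSL ℝ).continuous
  have hint1 : IntegrableOn (F' V₀) P volume :=
    hc'.continuousOn.integrableOn_compact hP
  have hint2 : IntegrableOn (fun p => Real.exp ⟪V₀, p⟫ • p) P volume :=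
    (((continuous_const.inner continuous_id).rexp).smul continuous_id).continuousOn.integrableOn_compact hP
  have hder : (∫ p in P, F' V₀ p) = innerSL ℝ (∫ p in P, Real.exp ⟪V₀, p⟫ • p) := by
    ext w
    rw [ContinuousLinearMap.integral_apply hint1]
    have e1 : ∀ p, (F' V₀ p) w = ⟪Real.exp ⟪V₀, p⟫ • p, w⟫ := fun p => by
      rw [hF']
      simp [real_inner_smul_left, Finset.mul_sum, mul_assoc]
    rw [integral_congr_ae (Filter.Eventually.of_forall e1)]
    have e2 : ∀ p, ⟪Real.exp ⟪V₀, p⟫ • p, w⟫ = ⟪w, Real.exp ⟪V₀, p⟫ • p⟫ := fun p =>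
      real_inner_comm _ _
    rw [integral_congr_ae (Filter.Eventually.of_forall fun p => e2 p), integral_inner hint2,
      innerSL_apply_apply, real_inner_comm]
  rw [← hder]
  exact key

lemma hasFDerivAt_logVol (hP : IsCompact P) (hint : (interior P).Nonempty)
    (V₀ : EuclideanSpace ℝ (Fin n)) :
    HasFDerivAt (fun V => Real.log (weightedVol P V))
      (innerSL ℝ (weightedBary P V₀)) V₀ := by
  have h := (hasFDerivAt_weightedVol hP V₀).log (weightedVol_pos hP hint V₀).ne'
  refine h.congr_fderiv ?_
  rw [weightedBary]
  ext w
  simp [real_inner_smul_left]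

lemma exists_lower (hP : IsCompact P) (hconv : Convex ℝ P) (hint : (interior P).Nonempty)
    (u : EuclideanSpace ℝ (Fin n)) :
    ∃ H : ℝ, (∀ p ∈ P, ⟪u, p⟫ ≤ H) ∧
      ∀ δ : ℝ, 0 < δ → ∃ c : ℝ, 0 < c ∧ ∀ t : ℝ, 0 ≤ t →
        c * Real.exp (t * (H - δ)) ≤ weightedVol P (t • u) := by
  obtain ⟨q, hq⟩ := hint
  have hne : P.Nonempty := ⟨q, interior_subset hq⟩
  have hcu : Continuous fun p : EuclideanSpace ℝ (Fin n) => ⟪u, p⟫ :=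
    continuous_const.inner continuous_id
  obtain ⟨pstar, hpstar, hmax⟩ := hP.exists_isMaxOn hne hcu.continuousOn
  refine ⟨⟪u, pstar⟫, fun p hp => hmax hp, fun δ hδ => ?_⟩
  set H := ⟪u, pstar⟫
  set d := H - ⟪u, q⟫ with hd
  have hd0 : 0 ≤ d := by
    have := hmax (interior_subset hq)
    simpa [hd] using this
  set s : ℝ := 1 - δ / (2 * (d + δ)) with hs
  have hdenom : 0 < 2 * (d + δ) := by linarith
  have hs1 : s < 1 := by
    rw [hs]; have : 0 < δ / (2 * (d + δ)) := by positivity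
    linarith
  have hs0 : 0 < s := by
    rw [hs]
    have h1 : δ / (2 * (d + δ)) ≤ 1/2 := by
      rw [div_le_div_iff₀ hdenom two_pos]; linarith
    linarith
  set x := (1 - s) • q + s • pstar with hx
  have hxint : x ∈ interior P :=
    hconv.combo_interior_closure_mem_interior hq (subset_closure hpstar)
      (by linarith) (by linarith) (by ring)
  have hxip : H - δ < ⟪u, x⟫ := by
    have e1 : ⟪u, x⟫ = (1 - s) * ⟪u, q⟫ + s * H := by
      rw [hx, inner_add_right, real_inner_smul_right, real_inner_smul_right]
    have e2 : ⟪u, x⟫ = H - (1 - s) * d := by rw [e1, hd]; ring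
    rw [e2]
    have h3 : (1 - s) * d < δ := by
      rw [hs]
      have h4 : (δ / (2 * (d + δ))) * d < δ := by
        rw [div_mul_eq_mul_div, div_lt_iff₀ hdenom]
        nlinarith
      simpa using h4
    linarith
  have hopen : IsOpen (interior P ∩ {p | H - δ < ⟪u, p⟫}) :=
    isOpen_interior.inter (isOpen_lt continuous_const (continuous_const.inner continuous_id))
  obtain ⟨r, hr0, hball⟩ := Metric.isOpen_iff.mp hopen x ⟨hxint, hxip⟩
  have hcball : 0 < (volume (ball x r)).toReal :=
    ENNReal.toReal_pos (measure_ball_pos volume x hr0).ne' (measure_ball_lt_top).ne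
  refine ⟨(volume (ball x r)).toReal, hcball, fun t ht => ?_⟩
  have hsubP : ball x r ⊆ P := fun y hy => interior_subset (hball hy).1
  have hcont : Continuous fun p : EuclideanSpace ℝ (Fin n) => Real.exp ⟪t • u, p⟫ :=
    (continuous_const.inner continuous_id).rexp
  have hint1 : IntegrableOn (fun p => Real.exp ⟪t • u, p⟫) P volume :=
    hcont.continuousOn.integrableOn_compact hP
  have step1 : ∫ p in ball x r, Real.exp ⟪t • u, p⟫ ≤ weightedVol P (t • u) := by
    rw [weightedVol]
    apply setIntegral_mono_set hint1
      (Filter.Eventually.of_forall fun p => (Real.exp_pos _).le)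
      (HasSubset.Subset.eventuallyLE hsubP)
  have step2 : (volume (ball x r)).toReal * Real.exp (t * (H - δ)) ≤
      ∫ p in ball x r, Real.exp ⟪t • u, p⟫ := by
    have : ∫ _p in ball x r, Real.exp (t * (H - δ)) =
        (volume (ball x r)).toReal * Real.exp (t * (H - δ)) := by
      rw [setIntegral_const, smul_eq_mul, measureReal_def]
    rw [← this]
    apply setIntegral_mono_on (integrableOn_const measure_ball_lt_top.ne)
      (hint1.mono_set hsubP) measurableSet_ball
    intro p hp
    rw [real_inner_smul_left]
    apply Real.exp_le_exp.mpr
    exact mul_le_mul_of_nonneg_left (le_of_lt (hball hp).2) ht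
  linarith

lemma convexOn_finsetSum {E' : Type*} [AddCommGroup E'] [Module ℝ E'] {ι : Type*}
    (t : Finset ι) {f : ι → E' → ℝ} (h : ∀ i ∈ t, ConvexOn ℝ Set.univ (f i)) :
    ConvexOn ℝ Set.univ (fun x => ∑ i ∈ t, f i x) := by
  classical
  induction t using Finset.induction_on with
  | empty => simpa using convexOn_const (0:ℝ) convex_univ
  | insert a s hnotmem ih =>
    simp only [Finset.sum_insert hnotmem]
    exact (h a (Finset.mem_insert_self a s)).add
      (ih fun i hi => h i (Finset.mem_insert_of_mem hi))

end Stmt3Aux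

open Stmt3Aux Real Set Metric in
/-- Corollary 1.7: there is a unique `V ∈ ℝⁿ` with `∑ᵢ A_{Pᵢ}(V) = 0`. -/
theorem stmt3 {n k : ℕ}
    (P : Fin k → Set (EuclideanSpace ℝ (Fin n)))
    (hPcpt : ∀ i, IsCompact (P i)) (hPconv : ∀ i, Convex ℝ (P i))
    (hPint : ∀ i, (interior (P i)).Nonempty)
    (hzero : (0 : EuclideanSpace ℝ (Fin n)) ∈ interior (∑ i, P i)) :
    ∃! V : EuclideanSpace ℝ (Fin n), ∑ i, weightedBary (P i) V = 0 := by
  classical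
  -- n = 0 : trivial
  rcases Nat.eq_zero_or_pos n with hn | hn
  · subst hn
    haveI : Subsingleton (EuclideanSpace ℝ (Fin 0)) := ⟨fun a b => by ext i; exact i.elim0⟩
    exact ⟨0, Subsingleton.elim _ _, fun y _ => Subsingleton.elim _ _⟩
  -- k = 0 : impossible
  rcases Nat.eq_zero_or_pos k with hk | hk
  · exfalso
    subst hk
    rw [show (∑ i : Fin 0, P i) = 0 from by simp] at hzero
    rw [show (0 : Set (EuclideanSpace ℝ (Fin n))) = {0} from rfl] at hzero
    set v : EuclideanSpace ℝ (Fin n) := EuclideanSpace.single ⟨0, hn⟩ 1 with hv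
    have hvne : v ≠ 0 := by
      intro h
      have h1 : v ⟨0, hn⟩ = 1 := by rw [hv]; simp
      rw [h] at h1
      simp at h1
    obtain ⟨ε, hε0, hball⟩ := Metric.mem_nhds_iff.mp (mem_interior_iff_mem_nhds.mp hzero)
    have hvnorm : 0 < ‖v‖ := norm_pos_iff.mpr hvne
    set w : EuclideanSpace ℝ (Fin n) := (ε / (2 * ‖v‖)) • v with hw
    have hwball : w ∈ Metric.ball (0 : EuclideanSpace ℝ (Fin n)) ε := by
      rw [mem_ball_zero_iff, hw, norm_smul, Real.norm_eq_abs, abs_of_pos (by positivity)]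
      have he : ε / (2 * ‖v‖) * ‖v‖ = ε / 2 := by
        field_simp
      rw [he]
      linarith
    have hwzero : w = 0 := hball hwball
    exact (smul_ne_zero (by positivity) hvne) hwzero
  -- main case
  set F : EuclideanSpace ℝ (Fin n) → ℝ :=
    fun V => ∑ i, Real.log (weightedVol (P i) V) with hFdef
  have hFderiv : ∀ V, HasFDerivAt F (innerSL ℝ (∑ i, weightedBary (P i) V)) V := by
    intro V
    have h1 := HasFDerivAt.fun_sum (u := Finset.univ)
      (fun i _ => hasFDerivAt_logVol (hPcpt i) (hPint i) V)
    have h2 : (∑ i, innerSL ℝ (weightedBary (P i) V)) =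
        innerSL ℝ (∑ i, weightedBary (P i) V) := (map_sum (innerSL ℝ) _ _).symm
    rw [← h2]
    exact h1
  have hFcont : Continuous F :=
    continuous_iff_continuousAt.mpr fun V => (hFderiv V).differentiableAt.continuousAt
  set i₀ : Fin k := ⟨0, hk⟩ with hi₀
  have hFstrict : StrictConvexOn ℝ Set.univ F := by
    have hsplit : F = fun V => Real.log (weightedVol (P i₀) V) +
        ∑ i ∈ Finset.univ.erase i₀, Real.log (weightedVol (P i) V) := by
      funext V
      rw [hFdef]
      exact (Finset.add_sum_erase _ _ (Finset.mem_univ i₀)).symm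
    rw [hsplit]
    exact (strictConvexOn_logVol (hPcpt i₀) (hPint i₀)).add_convexOn
      (convexOn_finsetSum _ fun i _ => convexOn_logVol (hPcpt i) (hPint i))
  have hFconv : ConvexOn ℝ Set.univ F := hFstrict.convexOn
  -- coercivity along rays
  obtain ⟨ε, hε0, hball⟩ := Metric.mem_nhds_iff.mp (mem_interior_iff_mem_nhds.mp hzero)
  have key : ∀ u : EuclideanSpace ℝ (Fin n), ‖u‖ = 1 →
      ∃ t : ℝ, 1 ≤ t ∧ F 0 + 1 < F (t • u) := by
    intro u hu
    choose H hH hclower using fun i => exists_lower (hPcpt i) (hPconv i) (hPint i) u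
    have hk' : (0:ℝ) < k := by exact_mod_cast hk
    have h4k : (0:ℝ) < 4 * k := by nlinarith
    set δ : ℝ := ε / (4 * k) with hδdef
    have hδ0 : 0 < δ := div_pos hε0 h4k
    choose c hc0 hcle using fun i => hclower i δ hδ0
    have hsum : ε/2 ≤ ∑ i, H i := by
      have hx : (ε/2) • u ∈ ∑ i, P i := by
        apply hball
        rw [mem_ball_zero_iff, norm_smul, Real.norm_eq_abs, abs_of_pos (by positivity), hu,
          mul_one]
        linarith
      obtain ⟨g, hg, hgsum⟩ := (Set.mem_fintype_sum _ _).mp hx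
      have e0 : ⟪u, (ε/2) • u⟫ = ε/2 := by
        rw [real_inner_smul_right, real_inner_self_eq_norm_sq, hu]
        ring
      calc ε/2 = ⟪u, ∑ i, g i⟫ := by rw [hgsum, e0]
        _ = ∑ i, ⟪u, g i⟫ := inner_sum _ _ _
        _ ≤ ∑ i, H i := Finset.sum_le_sum fun i _ => hH i _ (hg i)
    have hFt : ∀ t : ℝ, 0 ≤ t →
        ∑ i, (Real.log (c i) + t * (H i - δ)) ≤ F (t • u) := by
      intro t ht
      rw [hFdef]
      apply Finset.sum_le_sum
      intro i _
      have hle := hcle i t ht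
      calc Real.log (c i) + t * (H i - δ)
          = Real.log (c i * Real.exp (t * (H i - δ))) := by
            rw [Real.log_mul (hc0 i).ne' (Real.exp_pos _).ne', Real.log_exp]
        _ ≤ Real.log (weightedVol (P i) (t • u)) :=
            Real.log_le_log (mul_pos (hc0 i) (Real.exp_pos _)) hle
    set S : ℝ := ∑ i, Real.log (c i) with hSdef
    have hkδ : (k : ℝ) * δ = ε / 4 := by
      rw [hδdef]
      field_simp
    have hsum2 : ∀ t : ℝ, 0 ≤ t →
        S + t * (ε/4) ≤ ∑ i, (Real.log (c i) + t * (H i - δ)) := by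
      intro t ht
      have e1 : ∑ i, (Real.log (c i) + t * (H i - δ)) =
          S + t * ((∑ i, H i) - k * δ) := by
        rw [hSdef, Finset.sum_add_distrib, ← Finset.mul_sum, Finset.sum_sub_distrib,
          Finset.sum_const, Finset.card_univ, Fintype.card_fin, nsmul_eq_mul]
      rw [e1]
      have h5 : ε/4 ≤ (∑ i, H i) - k * δ := by
        rw [hkδ]; linarith
      nlinarith
    set t₀ : ℝ := max 1 ((F 0 + 1 - S + 1) * (4 / ε)) with ht₀
    refine ⟨t₀, le_max_left _ _, ?_⟩
    have ht₀0 : (0:ℝ) ≤ t₀ := le_trans zero_le_one (le_max_left _ _)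
    have h1 := hFt t₀ ht₀0
    have h2 := hsum2 t₀ ht₀0
    have h3 : F 0 + 1 - S + 1 ≤ t₀ * (ε/4) := by
      have h4 : (F 0 + 1 - S + 1) * (4/ε) ≤ t₀ := le_max_right _ _
      calc F 0 + 1 - S + 1 = ((F 0 + 1 - S + 1) * (4/ε)) * (ε/4) := by
            field_simp
        _ ≤ t₀ * (ε/4) := mul_le_mul_of_nonneg_right h4 (by positivity)
    linarith
  -- uniform radius via sphere compactness
  have hchoice : ∀ u : EuclideanSpace ℝ (Fin n),
      ∃ t : ℝ, 1 ≤ t ∧ (‖u‖ = 1 → F 0 + 1 < F (t • u)) := by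
    intro u
    by_cases h : ‖u‖ = 1
    · obtain ⟨t, htt1, htt2⟩ := key u h
      exact ⟨t, htt1, fun _ => htt2⟩
    · exact ⟨1, le_refl _, fun h' => absurd h' h⟩
  choose t ht1 ht2 using hchoice
  set U : EuclideanSpace ℝ (Fin n) → Set (EuclideanSpace ℝ (Fin n)) :=
    fun u => {v | F 0 + 1 < F (t u • v)} with hU
  have hUopen : ∀ u, IsOpen (U u) := fun u =>
    isOpen_lt continuous_const (hFcont.comp (continuous_id.const_smul (t u)))
  have hcover : Metric.sphere (0 : EuclideanSpace ℝ (Fin n)) 1 ⊆ ⋃ u, U u := by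
    intro v hv
    rw [mem_sphere_zero_iff_norm] at hv
    exact Set.mem_iUnion.mpr ⟨v, ht2 v hv⟩
  obtain ⟨s, hscover⟩ := (isCompact_sphere (0 : EuclideanSpace ℝ (Fin n)) 1).elim_finite_subcover
    U hUopen hcover
  set R : ℝ := 1 + ∑ u ∈ s, |t u| with hR
  have hR1 : 1 ≤ R := by
    rw [hR]
    have : (0:ℝ) ≤ ∑ u ∈ s, |t u| := Finset.sum_nonneg fun u _ => abs_nonneg _
    linarith
  have htR : ∀ u ∈ s, t u < R := by
    intro u hu
    rw [hR]
    have h1 : |t u| ≤ ∑ w ∈ s, |t w| :=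
      Finset.single_le_sum (f := fun w => |t w|) (fun w _ => abs_nonneg _) hu
    have := le_abs_self (t u)
    linarith
  have hclaim : ∀ V : EuclideanSpace ℝ (Fin n), R ≤ ‖V‖ → F 0 + 1 < F V := by
    intro V hV
    have hV0 : V ≠ 0 := by
      intro h
      rw [h, norm_zero] at hV
      linarith
    have hVnorm : 0 < ‖V‖ := norm_pos_iff.mpr hV0
    set v : EuclideanSpace ℝ (Fin n) := ‖V‖⁻¹ • V with hvdef
    have hvnorm : ‖v‖ = 1 := by
      rw [hvdef, norm_smul, Real.norm_eq_abs, abs_of_pos (by positivity),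
        inv_mul_cancel₀ hVnorm.ne']
    obtain ⟨u, hus, hvU⟩ := Set.mem_iUnion₂.mp (hscover (mem_sphere_zero_iff_norm.mpr hvnorm))
    have hFu : F 0 + 1 < F (t u • v) := hvU
    set a : ℝ := t u / ‖V‖ with ha
    have ht1u := ht1 u
    have ha0 : 0 < a := by
      rw [ha]
      positivity
    have ha1 : a < 1 := by
      rw [ha, div_lt_one hVnorm]
      exact lt_of_lt_of_le (htR u hus) hV
    have hav : t u • v = a • V := by
      rw [hvdef, ha, smul_smul, div_eq_mul_inv]
    have hconvx : F (a • V) ≤ a * F V + (1 - a) * F 0 := by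
      have h9 := hFconv.2 (Set.mem_univ V) (Set.mem_univ (0 : EuclideanSpace ℝ (Fin n)))
        (le_of_lt ha0) (by linarith : (0:ℝ) ≤ 1 - a) (by ring)
      simpa using h9
    rw [hav] at hFu
    have h5 : F 0 + 1 < a * F V + (1 - a) * F 0 := lt_of_lt_of_le hFu hconvx
    have h7 : a * (F 0 + 1) < a * F V := by nlinarith
    exact lt_of_mul_lt_mul_left h7 ha0.le
  -- minimizer exists
  obtain ⟨V₀, hV₀mem, hV₀min⟩ :=
    (isCompact_closedBall (0 : EuclideanSpace ℝ (Fin n)) R).exists_isMinOn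
      ⟨0, mem_closedBall_self (by linarith)⟩ hFcont.continuousOn
  have hglobal : ∀ V, F V₀ ≤ F V := by
    intro V
    by_cases h : V ∈ Metric.closedBall (0 : EuclideanSpace ℝ (Fin n)) R
    · exact hV₀min h
    · have hnorm : R ≤ ‖V‖ := by
        rw [Metric.mem_closedBall, dist_zero_right] at h
        linarith [not_le.mp h]
      have h1 := hclaim V hnorm
      have h2 : F V₀ ≤ F 0 := hV₀min (mem_closedBall_self (by linarith))
      linarith
  have hlocal : IsLocalMin F V₀ := Filter.Eventually.of_forall hglobal
  have hfzero := hlocal.hasFDerivAt_eq_zero (hFderiv V₀)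
  have hbaryzero : ∑ i, weightedBary (P i) V₀ = 0 := by
    have h1 := congrArg
      (fun T : EuclideanSpace ℝ (Fin n) →L[ℝ] ℝ => T (∑ i, weightedBary (P i) V₀)) hfzero
    simp only [innerSL_apply_apply, ContinuousLinearMap.zero_apply] at h1
    exact inner_self_eq_zero.mp h1
  -- uniqueness
  refine ⟨V₀, hbaryzero, fun W hW => ?_⟩
  by_contra hne
  set D : EuclideanSpace ℝ (Fin n) := W - V₀ with hD
  have hDne : D ≠ 0 := sub_ne_zero.mpr hne
  set L : ℝ → EuclideanSpace ℝ (Fin n) := fun s' => V₀ + s' • D with hL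
  have hLderiv : ∀ s' : ℝ, HasDerivAt L D s' := by
    intro s'
    have h1 : HasDerivAt (fun x : ℝ => x • D) ((1:ℝ) • D) s' :=
      (hasDerivAt_id s').smul_const D
    rw [one_smul] at h1
    exact h1.const_add V₀
  set φ : ℝ → ℝ := fun s' => F (L s') with hφ
  have hφderiv : ∀ s' : ℝ,
      HasDerivAt φ (innerSL ℝ (∑ i, weightedBary (P i) (L s')) D) s' :=
    fun s' => (hFderiv (L s')).comp_hasDerivAt s' (hLderiv s')
  have hL0 : L 0 = V₀ := by rw [hL]; simp
  have hL1 : L 1 = W := by rw [hL, hD]; simp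
  have hd0 : HasDerivAt φ 0 0 := by
    have h1 := hφderiv 0
    rw [hL0, hbaryzero] at h1
    simpa using h1
  have hd1 : HasDerivAt φ 0 1 := by
    have h1 := hφderiv 1
    rw [hL1, hW] at h1
    simpa using h1
  have hφstrict : StrictConvexOn ℝ Set.univ φ := by
    refine ⟨convex_univ, fun p _ q _ hpq a b ha hb hab => ?_⟩
    have hcomb : L (a*p + b*q) = a • L p + b • L q := by
      rw [hL]
      simp only []
      have hV : V₀ = (a+b) • V₀ := by rw [hab, one_smul]
      nth_rewrite 1 [hV]
      module
    have hLpq : L p ≠ L q := by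
      rw [hL]
      simp only []
      intro heq
      have h1 : (p - q) • D = 0 := by
        have : p • D - q • D = 0 := by
          have := sub_eq_zero.mpr heq
          simpa using this
        rw [sub_smul]
        exact this
      rcases smul_eq_zero.mp h1 with h' | h'
      · exact hpq (sub_eq_zero.mp h')
      · exact hDne h'
    calc φ (a • p + b • q) = F (a • L p + b • L q) := by
          show F (L (a • p + b • q)) = _
          rw [show a • p + b • q = a*p + b*q from rfl, hcomb]
      _ < a * F (L p) + b * F (L q) :=
          hFstrict.2 (Set.mem_univ _) (Set.mem_univ _) hLpq ha hb hab
      _ = a • φ p + b • φ q := by rw [hφ]; simp [smul_eq_mul]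
  have hlt1 := hφstrict.lt_slope_of_hasDerivAt (Set.mem_univ (0:ℝ)) (Set.mem_univ 1)
    zero_lt_one hd0
  have hlt2 := hφstrict.slope_lt_of_hasDerivAt (Set.mem_univ (0:ℝ)) (Set.mem_univ 1)
    zero_lt_one hd1
  linarith
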